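/- Define polynomials F_k in Q[t] by F_0 = F_1 = 1 and F_{k+1} = F_k - t^2 F_{k-1}. Then the generating function E^{(k)}(t) of Dyck paths of height at most k equals F_k / F_{k+1} as formal power series in t. -/

import Mathlib

/-- A walk (list of steps) is an excursion over step set `S` if all its steps lie
in `S`, all its partial sums are non-negative, and its total sum is `0`. -/
def IsExcursion (S : Set ℤ) (l : List ℤ) : Prop :=
  (∀ x ∈ l, x ∈ S) ∧ (∀ m : ℕ, 0 ≤ ((l.take m).sum)) ∧ l.sum = 0

/-- An excursion of height at most `k`: all partial sums lie in `[0, k]`. -/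
def IsBddExcursion (S : Set ℤ) (k : ℕ) (l : List ℤ) : Prop :=
  IsExcursion S l ∧ ∀ m : ℕ, (l.take m).sum ≤ (k : ℤ)

abbrev DyckA (k n : ℕ) := {l : List ℤ // IsBddExcursion {1, -1} k l ∧ l.length = n}

lemma sum_take_append (l₁ l₂ : List ℤ) (m : ℕ) :
    ((l₁ ++ l₂).take m).sum = (l₁.take m).sum + (l₂.take (m - l₁.length)).sum := by
  rw [List.take_append, List.sum_append]

-- finiteness
instance dyckA_finite (k n : ℕ) : Finite (DyckA k n) := by
  have : Function.Injective (fun l : DyckA k n =>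
      (⟨l.1.map (fun x => decide (x = 1)), by simp [l.2.2]⟩ :
        {l : List Bool // l.length = n})) := by
    rintro ⟨l, hl, hln⟩ ⟨l', hl', hln'⟩ h
    simp only [Subtype.mk.injEq] at h ⊢
    have key : ∀ l : List ℤ, (∀ x ∈ l, x ∈ ({1, -1} : Set ℤ)) →
        (l.map (fun x => decide (x = 1))).map (fun b => if b then (1:ℤ) else -1) = l := by
      intro l hmem
      rw [List.map_map]
      conv_rhs => rw [← List.map_id l]
      apply List.map_congr_left
      intro x hx
      have hx2 := hmem x hx
      simp only [Set.mem_insert_iff, Set.mem_singleton_iff] at hx2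
      rcases hx2 with rfl | rfl <;> norm_num
    calc l = (l.map (fun x => decide (x = 1))).map (fun b => if b then (1:ℤ) else -1) :=
            (key l hl.1.1).symm
      _ = (l'.map (fun x => decide (x = 1))).map (fun b => if b then (1:ℤ) else -1) := by rw [h]
      _ = l' := key l' hl'.1.1
  have : Finite {l : List Bool // l.length = n} := by
    have := List.finite_length_eq Bool n
    exact this.to_subtype
  exact Finite.of_injective _ ‹Function.Injective _›

lemma mem_S_cases {x : ℤ} (h : x ∈ ({1, -1} : Set ℤ)) : x = 1 ∨ x = -1 := by
  simpa [Set.mem_insert_iff, Set.mem_singleton_iff] using h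

lemma glue {k : ℕ} {u r : List ℤ} (hu : IsBddExcursion {1, -1} k u)
    (hr : IsBddExcursion {1, -1} (k + 1) r) :
    IsBddExcursion {1, -1} (k + 1) (1 :: (u ++ -1 :: r)) := by
  obtain ⟨⟨humem, hunn, husum⟩, hubd⟩ := hu
  obtain ⟨⟨hrmem, hrnn, hrsum⟩, hrbd⟩ := hr
  have key : ∀ s : ℕ, 0 ≤ ((1 :: (u ++ -1 :: r)).take s).sum ∧
      ((1 :: (u ++ -1 :: r)).take s).sum ≤ ((k : ℤ) + 1) := by
    intro s
    match s with
    | 0 =>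
      simp only [List.take_zero, List.sum_nil]
      exact ⟨le_refl 0, by positivity⟩
    | s + 1 =>
      rw [List.take_succ_cons, List.sum_cons, sum_take_append]
      rcases le_or_gt s u.length with hs | hs
      · rw [Nat.sub_eq_zero_of_le hs]
        simp only [List.take_zero, List.sum_nil, add_zero]
        constructor
        · linarith [hunn s]
        · linarith [hubd s]
      · obtain ⟨q, rfl⟩ := Nat.exists_eq_add_of_lt hs
        rw [List.take_of_length_le (by omega), husum]
        have : u.length + q + 1 - u.length = q + 1 := by omega
        rw [this, List.take_succ_cons, List.sum_cons]
        have hrbd' := hrbd q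
        push_cast at hrbd'
        constructor
        · linarith [hrnn q]
        · linarith
  refine ⟨⟨?_, fun m => (key m).1, ?_⟩, fun m => by exact_mod_cast (key m).2⟩
  · intro x hx
    simp only [List.mem_cons, List.mem_append] at hx
    rcases hx with rfl | hx | rfl | hx
    · left; rfl
    · exact humem x hx
    · right; rfl
    · exact hrmem x hx
  · simp [List.sum_append, husum, hrsum]

lemma middle_inj {u u' r r' : List ℤ}
    (hunn : ∀ m : ℕ, 0 ≤ ((u.take m).sum)) (husum : u.sum = 0)
    (hunn' : ∀ m : ℕ, 0 ≤ ((u'.take m).sum)) (husum' : u'.sum = 0)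
    (h : u ++ -1 :: r = u' ++ -1 :: r') : u = u' ∧ r = r' := by
  have hlen : u.length = u'.length := by
    by_contra hne
    have key : ∀ v v' s s' : List ℤ, v.sum = 0 →
        (∀ m : ℕ, 0 ≤ ((v'.take m).sum)) → v.length < v'.length →
        v ++ -1 :: s = v' ++ -1 :: s' → False := by
      intro v v' s s' hvsum hvnn hlt heq
      have h1 : (((v ++ -1 :: s)).take (v.length + 1)).sum = -1 := by
        rw [sum_take_append, List.take_of_length_le (by omega), hvsum]
        simp
      have h2 : (((v' ++ -1 :: s')).take (v.length + 1)).sum = (v'.take (v.length + 1)).sum := by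
        rw [sum_take_append, Nat.sub_eq_zero_of_le (by omega)]
        simp
      rw [heq, h2] at h1
      linarith [hvnn (v.length + 1)]
    rcases lt_or_gt_of_ne hne with hlt | hlt
    · exact key u u' r r' husum hunn' hlt h
    · exact key u' u r' r husum' hunn hlt h.symm
  obtain ⟨h1, h2⟩ := List.append_inj h hlen
  exact ⟨h1, by injection h2⟩

lemma split {k m : ℕ} {l : List ℤ} (hl : IsBddExcursion {1, -1} (k + 1) l)
    (hlen : l.length = m + 2) :
    ∃ u r : List ℤ, IsBddExcursion {1, -1} k u ∧ IsBddExcursion {1, -1} (k + 1) r ∧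
      u.length + r.length = m ∧ l = 1 :: (u ++ -1 :: r) := by
  obtain ⟨⟨hmem, hnn, hsum⟩, hbd⟩ := hl
  obtain ⟨a, t, rfl⟩ : ∃ a t, l = a :: t := by
    cases l with
    | nil => simp at hlen
    | cons a t => exact ⟨a, t, rfl⟩
  have ha : a = 1 := by
    have h1 := hnn 1
    simp only [List.take_succ_cons, List.take_zero, List.sum_cons, List.sum_nil, add_zero] at h1
    rcases mem_S_cases (hmem a (by simp)) with h | h
    · exact h
    · omega
  subst ha
  have htlen : t.length = m + 1 := by simpa using hlen
  have htsum : t.sum = -1 := by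
    simp only [List.sum_cons] at hsum; omega
  -- partial sums of t, shifted
  have htnn : ∀ q : ℕ, -1 ≤ (t.take q).sum := by
    intro q
    have := hnn (q + 1)
    rw [List.take_succ_cons, List.sum_cons] at this
    omega
  have htbd : ∀ q : ℕ, (t.take q).sum ≤ (k : ℤ) := by
    intro q
    have := hbd (q + 1)
    rw [List.take_succ_cons, List.sum_cons] at this
    push_cast at this ⊢
    omega
  classical
  have hex : ∃ q : ℕ, (t.take q).sum = -1 := ⟨t.length, by rwa [List.take_length]⟩
  set p := Nat.find hex with hp_def
  have hp : (t.take p).sum = -1 := Nat.find_spec hex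
  have hmin : ∀ q < p, (t.take q).sum ≠ -1 := fun q hq => Nat.find_min hex hq
  have hppos : 1 ≤ p := by
    rcases Nat.eq_zero_or_pos p with h | h
    · exfalso; rw [h] at hp; simp at hp
    · exact h
  have hple : p ≤ t.length := Nat.find_min' hex (by rwa [List.take_length])
  have hnnlt : ∀ q < p, 0 ≤ (t.take q).sum := by
    intro q hq
    have := htnn q
    have := hmin q hq
    omega
  have hplt : p - 1 < t.length := by omega
  have hstep : (t.take p).sum = (t.take (p-1)).sum + t[p-1] := by
    have := List.sum_take_succ t (p-1) hplt
    rwa [Nat.sub_add_cancel hppos] at this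
  have htp : t[p-1] = -1 ∧ (t.take (p-1)).sum = 0 := by
    have hmemp : t[p-1] = 1 ∨ t[p-1] = -1 :=
      mem_S_cases (hmem _ (List.mem_cons_of_mem _ (List.getElem_mem hplt)))
    have h0 := hnnlt (p-1) (by omega)
    rcases hmemp with h | h <;> omega
  obtain ⟨htpval, htp0⟩ := htp
  refine ⟨t.take (p-1), t.drop p, ?_, ?_, ?_, ?_⟩
  · -- u is bounded excursion of height k
    refine ⟨⟨?_, ?_, htp0⟩, ?_⟩
    · intro x hx
      exact hmem x (List.mem_cons_of_mem _ (List.mem_of_mem_take hx))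
    · intro q
      rw [List.take_take]
      exact hnnlt _ (by omega)
    · intro q
      rw [List.take_take]
      exact htbd _
  · -- r is bounded excursion of height k+1
    refine ⟨⟨?_, ?_, ?_⟩, ?_⟩
    · intro x hx
      exact hmem x (List.mem_cons_of_mem _ (List.mem_of_mem_drop hx))
    · intro q
      have hta : (t.take (p + q)).sum = (t.take p).sum + ((t.drop p).take q).sum := by
        rw [List.take_add, List.sum_append]
      have := htnn (p + q)
      omega
    · have : t.sum = (t.take p).sum + (t.drop p).sum := by
        rw [← List.sum_append, List.take_append_drop]
      omega
    · intro q
      have hta : (t.take (p + q)).sum = (t.take p).sum + ((t.drop p).take q).sum := by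
        rw [List.take_add, List.sum_append]
      have := htbd (p + q)
      push_cast
      omega
  · simp only [List.length_take, List.length_drop]
    omega
  · congr 1
    conv_lhs => rw [← List.take_append_drop (p-1) t]
    congr 1
    rw [List.drop_eq_getElem_cons hplt, htpval, Nat.sub_add_cancel hppos]

lemma card0 (k : ℕ) : Nat.card (DyckA k 0) = 1 := by
  rw [Nat.card_eq_one_iff_unique]
  constructor
  · constructor
    rintro ⟨l, hl, hlen⟩ ⟨l', hl', hlen'⟩
    simp only [Subtype.mk.injEq]
    rw [List.length_eq_zero_iff] at hlen hlen'
    rw [hlen, hlen']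
  · exact ⟨⟨[], ⟨⟨by simp, by simp, by simp⟩, by simp⟩, rfl⟩⟩

lemma card1 (k : ℕ) : Nat.card (DyckA k 1) = 0 := by
  have : IsEmpty (DyckA k 1) := by
    constructor
    rintro ⟨l, ⟨⟨hmem, hnn, hsum⟩, hbd⟩, hlen⟩
    rw [List.length_eq_one_iff] at hlen
    obtain ⟨x, rfl⟩ := hlen
    simp only [List.sum_cons, List.sum_nil, add_zero] at hsum
    rcases mem_S_cases (hmem x (by simp)) with h | h <;> omega
  simp [Nat.card_of_isEmpty]

lemma cardE0 (k : ℕ) (hn : 1 ≤ k) : Nat.card (DyckA 0 k) = 0 := by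
  have : IsEmpty (DyckA 0 k) := by
    constructor
    rintro ⟨l, ⟨⟨hmem, hnn, hsum⟩, hbd⟩, hlen⟩
    obtain ⟨a, t, rfl⟩ : ∃ a t, l = a :: t := by
      cases l with
      | nil => simp at hlen; omega
      | cons a t => exact ⟨a, t, rfl⟩
    have h1 := hnn 1
    have h2 := hbd 1
    simp only [List.take_succ_cons, List.take_zero, List.sum_cons, List.sum_nil, add_zero,
      Nat.cast_zero] at h1 h2
    rcases mem_S_cases (hmem a (by simp)) with h | h <;> omega
  simp [Nat.card_of_isEmpty]

lemma cardRec (k m : ℕ) :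
    Nat.card (DyckA (k+1) (m+2)) =
      ∑ p ∈ Finset.HasAntidiagonal.antidiagonal m, Nat.card (DyckA k p.1) * Nat.card (DyckA (k+1) p.2) := by
  classical
  have Φdef : ∀ x : (Σ p : Finset.HasAntidiagonal.antidiagonal m, DyckA k p.1.1 × DyckA (k+1) p.1.2),
      (1 :: (x.2.1.1 ++ -1 :: x.2.2.1)).length = m + 2 := by
    rintro ⟨⟨⟨i, j⟩, hij⟩, ⟨u, hu, hul⟩, ⟨r, hr, hrl⟩⟩
    rw [Finset.HasAntidiagonal.mem_antidiagonal] at hij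
    have hul' : u.length = i := hul
    have hrl' : r.length = j := hrl
    simp only [List.length_cons, List.length_append, List.length_cons]
    omega
  let Φ : (Σ p : Finset.HasAntidiagonal.antidiagonal m, DyckA k p.1.1 × DyckA (k+1) p.1.2) → DyckA (k+1) (m+2) :=
    fun x => ⟨1 :: (x.2.1.1 ++ -1 :: x.2.2.1), ⟨glue x.2.1.2.1 x.2.2.2.1, Φdef x⟩⟩
  have hinj : Function.Injective Φ := by
    rintro ⟨⟨⟨i, j⟩, hij⟩, ⟨u, hu, hul⟩, ⟨r, hr, hrl⟩⟩
      ⟨⟨⟨i', j'⟩, hij'⟩, ⟨u', hu', hul'⟩, ⟨r', hr', hrl'⟩⟩ h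
    simp only [Φ, Subtype.mk.injEq, List.cons.injEq, true_and] at h
    obtain ⟨hueq, hreq⟩ := middle_inj hu.1.2.1 hu.1.2.2 hu'.1.2.1 hu'.1.2.2 h
    subst hueq
    subst hreq
    obtain rfl : i = i' := by
      have h1 : u.length = i := hul
      have h2 : u.length = i' := hul'
      omega
    obtain rfl : j = j' := by
      have h1 : r.length = j := hrl
      have h2 : r.length = j' := hrl'
      omega
    rfl
  have hsurj : Function.Surjective Φ := by
    rintro ⟨l, hl, hlen⟩
    obtain ⟨u, r, hu, hr, hlensum, rfl⟩ := split hl hlen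
    exact ⟨⟨⟨⟨u.length, r.length⟩, Finset.HasAntidiagonal.mem_antidiagonal.2 hlensum⟩,
      ⟨u, hu, rfl⟩, ⟨r, hr, rfl⟩⟩, rfl⟩
  rw [← Nat.card_eq_of_bijective Φ ⟨hinj, hsurj⟩]
  haveI : ∀ p : Finset.HasAntidiagonal.antidiagonal m, Fintype (DyckA k p.1.1 × DyckA (k+1) p.1.2) :=
    fun p => Fintype.ofFinite _
  calc Nat.card (Σ p : Finset.HasAntidiagonal.antidiagonal m, DyckA k p.1.1 × DyckA (k+1) p.1.2)
      = Fintype.card (Σ p : Finset.HasAntidiagonal.antidiagonal m, DyckA k p.1.1 × DyckA (k+1) p.1.2) :=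
        Nat.card_eq_fintype_card
    _ = ∑ p : Finset.HasAntidiagonal.antidiagonal m, Fintype.card (DyckA k p.1.1 × DyckA (k+1) p.1.2) :=
        Fintype.card_sigma
    _ = ∑ p : Finset.HasAntidiagonal.antidiagonal m, Nat.card (DyckA k p.1.1) * Nat.card (DyckA (k+1) p.1.2) := by
        refine Finset.sum_congr rfl fun p _ => ?_
        rw [← Nat.card_eq_fintype_card, Nat.card_prod]
    _ = ∑ p ∈ Finset.HasAntidiagonal.antidiagonal m, Nat.card (DyckA k p.1) * Nat.card (DyckA (k+1) p.2) :=
        Finset.sum_coe_sort (Finset.HasAntidiagonal.antidiagonal m)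
          (fun p => Nat.card (DyckA k p.1) * Nat.card (DyckA (k+1) p.2))

/-- The length generating function of excursions over `S` of height at most `k`. -/
noncomputable def bddExcursionGF (S : Set ℤ) (k : ℕ) : PowerSeries ℚ :=
  PowerSeries.mk fun n =>
    (Nat.card {l : List ℤ // IsBddExcursion S k l ∧ l.length = n} : ℚ)

lemma coeff_gf (k n : ℕ) :
    PowerSeries.coeff n (bddExcursionGF {1, -1} k) = (Nat.card (DyckA k n) : ℚ) := by
  rw [bddExcursionGF, PowerSeries.coeff_mk]

lemma gf0 : bddExcursionGF {1, -1} 0 = 1 := by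
  ext n
  rw [coeff_gf, PowerSeries.coeff_one]
  match n with
  | 0 => simp [card0]
  | n + 1 => simp [cardE0 (n + 1) (by omega)]

lemma gf_rec (k : ℕ) : bddExcursionGF {1, -1} (k + 1) =
    1 + PowerSeries.X ^ 2 * bddExcursionGF {1, -1} k * bddExcursionGF {1, -1} (k + 1) := by
  ext n
  rw [map_add, PowerSeries.coeff_one, mul_assoc, mul_comm (PowerSeries.X ^ 2),
    PowerSeries.coeff_mul_X_pow', coeff_gf]
  match n with
  | 0 => simp [card0]
  | 1 => simp [card1]
  | m + 2 =>
    simp only [if_pos (by omega : 2 ≤ m + 2), Nat.add_sub_cancel, if_neg (by omega : ¬ m + 2 = 0),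
      zero_add]
    rw [PowerSeries.coeff_mul, cardRec]
    push_cast
    exact Finset.sum_congr rfl fun p _ => by rw [coeff_gf, coeff_gf]

/-- If `F₀ = F₁ = 1` and `F_{k+1} = F_k - t² F_{k-1}`, then the generating function
of Dyck paths of height at most `k` equals `F_k / F_{k+1}` as formal power series. -/
theorem dyck_bounded_height (F : ℕ → Polynomial ℚ) (hF0 : F 0 = 1) (hF1 : F 1 = 1)
    (hFrec : ∀ k : ℕ, F (k + 2) = F (k + 1) - Polynomial.X ^ 2 * F k) (k : ℕ) :
    bddExcursionGF {1, -1} k * (F (k + 1) : PowerSeries ℚ) = (F k : PowerSeries ℚ) := by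
  induction k with
  | zero => rw [hF0, hF1, gf0, Polynomial.coe_one, mul_one]
  | succ k ih =>
    have hrec := gf_rec k
    rw [hFrec k, Polynomial.coe_sub, Polynomial.coe_mul, Polynomial.coe_pow, Polynomial.coe_X,
      ← ih]
    linear_combination ((F (k + 1) : PowerSeries ℚ)) * hrec
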